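/- For any bisimplicial set S, the map Φ: diag S → W̄S, which sends a p-simplex t ∈ S_{p,p} to Φt = ((d_1^h)^p t, (d_2^h)^{p-1} d_0^v t, ..., (d_{m+1}^h)^{p-m}(d_0^v)^m t, ..., (d_0^v)^p t), is a well-defined morphism of simplicial sets, natural in S. -/

import Mathlib

/-!
STATEMENT 1: For any bisimplicial set `S`, the map `Φ : diag S → W̄S` given by
`Φ t = ((d_1^h)^p t, …, (d_{m+1}^h)^{p-m}(d_0^v)^m t, …, (d_0^v)^p t)` is a well-defined
morphism of simplicial sets, natural in `S`.
-/

open CategoryTheory Opposite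

open CategoryTheory Opposite

abbrev BiSSet := SimplexCategoryᵒᵖ ⥤ SSet.{0}

namespace BiSSet

variable (S : BiSSet)

def obj2 (p q : ℕ) : Type :=
  (S.obj (op (SimplexCategory.mk p))).obj (op (SimplexCategory.mk q))

def arr (m n : ℕ) (f : ℕ → ℕ) (hf : Monotone f) :
    SimplexCategory.mk m ⟶ SimplexCategory.mk n :=
  SimplexCategory.mkHom ⟨fun a => ⟨min (f a.val) n, by omega⟩, fun a b hab => by
    have : f a.val ≤ f b.val := hf hab
    simp only [Fin.mk_le_mk]
    omega⟩

def hAct {p p' q : ℕ} (f : SimplexCategory.mk p' ⟶ SimplexCategory.mk p) :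
    S.obj2 p q → S.obj2 p' q := fun t => (S.map f.op).app _ t

def vAct {p q q' : ℕ} (f : SimplexCategory.mk q' ⟶ SimplexCategory.mk q) :
    S.obj2 p q → S.obj2 p q' := fun t => (S.obj _).map f.op t

def fc (i : ℕ) : ℕ → ℕ := fun a => if a < i then a else a + 1
def dgm (i : ℕ) : ℕ → ℕ := fun a => if a ≤ i then a else a - 1
def fcIter (i k : ℕ) : ℕ → ℕ := fun a => if a < i then a else a + k

lemma fc_mono (i : ℕ) : Monotone (fc i) := fun a b h => by
  simp only [fc]; split <;> split <;> omega
lemma dgm_mono (i : ℕ) : Monotone (dgm i) := fun a b h => by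
  simp only [dgm]; split <;> split <;> omega
lemma fcIter_mono (i k : ℕ) : Monotone (fcIter i k) := fun a b h => by
  simp only [fcIter]; split <;> split <;> omega

def dh (i : ℕ) {p' p q : ℕ} : S.obj2 p q → S.obj2 p' q :=
  S.hAct (arr p' p (fc i) (fc_mono i))
def dv (i : ℕ) {p q' q : ℕ} : S.obj2 p q → S.obj2 p q' :=
  S.vAct (arr q' q (fc i) (fc_mono i))
def sh (i : ℕ) {p' p q : ℕ} : S.obj2 p q → S.obj2 p' q :=
  S.hAct (arr p' p (dgm i) (dgm_mono i))
def sv (i : ℕ) {p q' q : ℕ} : S.obj2 p q → S.obj2 p q' :=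
  S.vAct (arr q' q (dgm i) (dgm_mono i))

def ocast {p q p' q' : ℕ} (hp : p = p') (hq : q = q') : S.obj2 p q → S.obj2 p' q' := by
  subst hp; subst hq; exact id

def Wbar (p : ℕ) : Type :=
  { t : ∀ m : Fin (p + 1), S.obj2 m.val (p - m.val) //
    ∀ m : Fin p, S.dv 0 (t m.castSucc) = S.dh (m.val + 1) (t m.succ) }

def wFaceTuple {p : ℕ} (i : ℕ) (t : S.Wbar (p + 1)) (m : Fin (p + 1)) :
    S.obj2 m.val (p - m.val) :=
  if h : m.val < i then S.dv (i - m.val) (t.1 ⟨m.val, by omega⟩)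
  else S.ocast rfl (show p + 1 - (m.val + 1) = p - m.val by omega)
    (S.dh i (t.1 ⟨m.val + 1, by omega⟩))

def wDegTuple {p : ℕ} (i : ℕ) (hi : i ≤ p) (t : S.Wbar p) (m : Fin (p + 2)) :
    S.obj2 m.val (p + 1 - m.val) :=
  if h : m.val ≤ i then S.sv (i - m.val) (t.1 ⟨m.val, by omega⟩)
  else S.ocast rfl (show p - (m.val - 1) = p + 1 - m.val by omega)
    (S.sh i (t.1 ⟨m.val - 1, by omega⟩))

/-- `Φ t = ((d_1^h)^p t, (d_2^h)^{p-1} d_0^v t, …, (d_{m+1}^h)^{p-m}(d_0^v)^m t, …, (d_0^v)^p t)`. -/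
def phiTuple {p : ℕ} (t : S.obj2 p p) (m : Fin (p + 1)) : S.obj2 m.val (p - m.val) :=
  S.hAct (arr m.val p (fcIter (m.val + 1) (p - m.val)) (fcIter_mono _ _))
    (S.vAct (arr (p - m.val) p (fcIter 0 m.val) (fcIter_mono _ _)) t)

section Aux

variable (S : BiSSet)

/-! ### Generalities about `arr` and the two actions -/

lemma arr_ext {a b : ℕ} {f g : ℕ → ℕ} (hf : Monotone f) (hg : Monotone g)
    (h : ∀ x, x ≤ a → min (f x) b = min (g x) b) : arr a b f hf = arr a b g hg := by
  apply SimplexCategory.Hom.ext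
  apply OrderHom.ext
  funext x
  exact Fin.ext (h x.val x.is_le)

lemma arr_comp {a b c : ℕ} {f g : ℕ → ℕ} (hf : Monotone f) (hg : Monotone g)
    (h1 : ∀ x, x ≤ a → f x ≤ b) (h2 : ∀ x, x ≤ a → g (f x) ≤ c) :
    arr a b f hf ≫ arr b c g hg = arr a c (fun x => g (f x)) (hg.comp hf) := by
  apply SimplexCategory.Hom.ext
  apply OrderHom.ext
  funext x
  apply Fin.ext
  have e1 := h1 x.val x.is_le
  have e2 := h2 x.val x.is_le
  simp only [arr, SimplexCategory.mkHom, SimplexCategory.comp_toOrderHom,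
    SimplexCategory.Hom.toOrderHom_mk, OrderHom.comp_coe, OrderHom.coe_mk, Function.comp_apply,
    SimplexCategory.len_mk]
  have e3 : min (f x.val) b = f x.val := by omega
  show min (g (min (f x.val) b)) c = min (g (f x.val)) c
  rw [e3]

lemma arr_id {a : ℕ} {f : ℕ → ℕ} (hf : Monotone f) (h : ∀ x, x ≤ a → f x = x) :
    arr a a f hf = 𝟙 _ := by
  apply SimplexCategory.Hom.ext
  apply OrderHom.ext
  funext x
  apply Fin.ext
  simp only [arr, SimplexCategory.mkHom, SimplexCategory.Hom.toOrderHom_mk, OrderHom.coe_mk,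
    SimplexCategory.id_toOrderHom, OrderHom.id_coe, id_eq, SimplexCategory.len_mk,
    h x.val x.is_le]
  show min (f x.val) a = x.val
  rw [h x.val x.is_le]
  exact Nat.min_eq_left x.is_le

lemma hAct_hAct {p p' p'' q : ℕ} (f : SimplexCategory.mk p' ⟶ SimplexCategory.mk p)
    (g : SimplexCategory.mk p ⟶ SimplexCategory.mk p'') (t : S.obj2 p'' q) :
    S.hAct f (S.hAct g t) = S.hAct (f ≫ g) t := by
  show _ = (S.map (f ≫ g).op).app _ t
  rw [op_comp, S.map_comp, NatTrans.comp_app]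
  rfl

lemma vAct_vAct {p q q' q'' : ℕ} (f : SimplexCategory.mk q' ⟶ SimplexCategory.mk q)
    (g : SimplexCategory.mk q ⟶ SimplexCategory.mk q'') (t : S.obj2 p q'') :
    S.vAct f (S.vAct g t) = S.vAct (f ≫ g) t := by
  show _ = (S.obj _).map (f ≫ g).op t
  rw [op_comp, Functor.map_comp]
  rfl

lemma hAct_vAct {p p' q q' : ℕ} (f : SimplexCategory.mk p' ⟶ SimplexCategory.mk p)
    (g : SimplexCategory.mk q' ⟶ SimplexCategory.mk q) (t : S.obj2 p q) :
    S.hAct f (S.vAct g t) = S.vAct g (S.hAct f t) :=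
  NatTrans.naturality_apply (S.map f.op) g.op t

lemma hAct_id {p q : ℕ} (t : S.obj2 p q) : S.hAct (𝟙 (SimplexCategory.mk p)) t = t := by
  show (S.map (𝟙 (SimplexCategory.mk p)).op).app _ t = t
  rw [op_id, S.map_id, NatTrans.id_app]
  rfl

lemma vAct_id {p q : ℕ} (t : S.obj2 p q) : S.vAct (𝟙 (SimplexCategory.mk q)) t = t := by
  show (S.obj _).map (𝟙 (SimplexCategory.mk q)).op t = t
  rw [op_id, CategoryTheory.Functor.map_id]
  rfl

lemma mono_id : Monotone (fun a : ℕ => a) := fun _ _ h => h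

lemma mono_shift (d : ℕ) : Monotone (fun j => j + d) := fun _ _ h => Nat.add_le_add_right h d

lemma hAct_ocast {p p' q q' : ℕ} (hq : q = q')
    (f : SimplexCategory.mk p' ⟶ SimplexCategory.mk p) (t : S.obj2 p q) :
    S.hAct f (S.ocast rfl hq t) = S.ocast rfl hq (S.hAct f t) := by
  subst hq; rfl

lemma vAct_arr_cast {p q q' : ℕ} (hq : q = q') {f : ℕ → ℕ} (hf : Monotone f)
    (h : ∀ x, x ≤ q' → f x = x) (t : S.obj2 p q) :
    S.vAct (arr q' q f hf) t = S.ocast rfl hq t := by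
  subst hq
  rw [arr_id hf h, S.vAct_id]
  rfl

/-! ### The bridge lemma: compatibilities along a tuple of `W̄S` -/

lemma bridge {p m : ℕ} (t : S.Wbar p) :
    ∀ m', m ≤ m' → ∀ hm' : m' ≤ p, ∀ hm : m ≤ p,
      S.vAct (arr (p - m') (p - m) (fun j => j + (m' - m)) (mono_shift _)) (t.1 ⟨m, by omega⟩) =
      S.hAct (arr m m' (fun a => a) mono_id) (t.1 ⟨m', by omega⟩) := by
  intro m' hmm
  induction m', hmm using Nat.le_induction with
  | base =>
      intro h1 h2
      rw [arr_id (mono_shift _) (fun x hx => by omega),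
          arr_id mono_id (fun x hx => rfl), S.vAct_id, S.hAct_id]
  | succ n hn ih =>
      intro hn1 hmp
      have hnp : n ≤ p := by omega
      have e1 : arr (p - (n + 1)) (p - m) (fun j => j + (n + 1 - m)) (mono_shift _)
          = arr (p - (n + 1)) (p - n) (fc 0) (fc_mono 0) ≫
            arr (p - n) (p - m) (fun j => j + (n - m)) (mono_shift _) := by
        rw [arr_comp (fc_mono 0) (mono_shift _) (fun x hx => by simp [fc]; omega)
          (fun x hx => by simp [fc]; omega)]
        exact (arr_ext _ _ (fun x hx => by simp [fc]; omega)).symm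
      rw [e1, ← S.vAct_vAct, ih hnp hmp, ← S.hAct_vAct]
      have e2 : S.vAct (arr (p - (n + 1)) (p - n) (fc 0) (fc_mono 0)) (t.1 ⟨n, by omega⟩)
          = S.hAct (arr n (n + 1) (fc (n + 1)) (fc_mono _)) (t.1 ⟨n + 1, by omega⟩) :=
        t.2 ⟨n, by omega⟩
      rw [e2, S.hAct_hAct]
      rw [arr_comp mono_id (fc_mono _) (fun x hx => by omega)
        (fun x hx => by simp only [fc]; split <;> omega)]
      exact congrArg (fun a => S.hAct a (t.1 ⟨n + 1, by omega⟩))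
        (arr_ext _ _ (fun x hx => by simp only [fc]; split <;> omega))

/-! ### The action of a simplicial operator on `W̄S` -/

lemma wT_vmono (f : ℕ → ℕ) (hf : Monotone f) (k m : ℕ) :
    Monotone (fun j => f (k + j) - m) :=
  fun _ _ h => Nat.sub_le_sub_right (hf (Nat.add_le_add_left h _)) m

def wTm {q p : ℕ} (f : ℕ → ℕ) (hf : Monotone f) (t : S.Wbar p) (k : Fin (q + 1))
    (m : ℕ) (hm : m ≤ p) : S.obj2 k.val (q - k.val) :=
  S.hAct (arr k.val m f hf)
    (S.vAct (arr (q - k.val) (p - m) (fun j => f (k.val + j) - m) (wT_vmono f hf k.val m))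
      (t.1 ⟨m, by omega⟩))

lemma wTm_congr {q p : ℕ} {f f' : ℕ → ℕ} (hf : Monotone f) (hf' : Monotone f') (t : S.Wbar p)
    (k : Fin (q + 1)) (m : ℕ) (hm : m ≤ p) (h : ∀ a, a ≤ q → f a = f' a) :
    S.wTm f hf t k m hm = S.wTm f' hf' t k m hm := by
  unfold wTm
  rw [arr_ext hf hf' (fun x hx => by rw [h x (by omega)]),
      arr_ext (wT_vmono f hf k.val m) (wT_vmono f' hf' k.val m)
        (fun x hx => by rw [h (k.val + x) (by omega)])]

lemma wTm_mcongr {q p : ℕ} (f : ℕ → ℕ) (hf : Monotone f) (t : S.Wbar p) (k : Fin (q + 1))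
    {m m' : ℕ} (hm : m ≤ p) (hm' : m' ≤ p) (e : m = m') :
    S.wTm f hf t k m hm = S.wTm f hf t k m' hm' := by
  subst e; rfl

lemma shift_mono {g : ℕ → ℕ} (hg : Monotone g) (m m' : ℕ) :
    Monotone (fun j => m + g j - m') :=
  fun _ _ h => Nat.sub_le_sub_right (Nat.add_le_add_left (hg h) m) m'

lemma act_shift {p kk r : ℕ} (t : S.Wbar p) (m m' : ℕ) (hm : m ≤ p) (hm' : m' ≤ p)
    (hmm : m ≤ m') (f g : ℕ → ℕ) (hf : Monotone f) (hg : Monotone g)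
    (hfk : ∀ a, a ≤ kk → f a ≤ m)
    (hgv : ∀ j, j ≤ r → m' ≤ m + g j ∧ m + g j ≤ p) :
    S.hAct (arr kk m f hf) (S.vAct (arr r (p - m) g hg) (t.1 ⟨m, by omega⟩)) =
    S.hAct (arr kk m' f hf)
      (S.vAct (arr r (p - m') (fun j => m + g j - m') (shift_mono hg m m'))
        (t.1 ⟨m', by omega⟩)) := by
  have e1 : arr r (p - m) g hg
      = arr r (p - m') (fun j => m + g j - m') (shift_mono hg m m') ≫
        arr (p - m') (p - m) (fun j => j + (m' - m)) (mono_shift _) := by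
    rw [arr_comp (shift_mono hg m m') (mono_shift _)
      (fun x hx => by have := hgv x hx; omega) (fun x hx => by have := hgv x hx; omega)]
    exact (arr_ext _ _ (fun x hx => by have := hgv x hx; omega)).symm
  rw [e1, ← S.vAct_vAct, S.bridge t m' hmm hm' hm, ← S.hAct_vAct, S.hAct_hAct]
  rw [arr_comp hf mono_id hfk (fun x hx => le_trans (hfk x hx) hmm)]

def wT {q p : ℕ} (f : ℕ → ℕ) (hf : Monotone f) (hq : f q ≤ p) (t : S.Wbar p)
    (k : Fin (q + 1)) : S.obj2 k.val (q - k.val) :=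
  S.wTm f hf t k (f k.val) (le_trans (hf k.is_le) hq)

lemma wT_compat {q p : ℕ} (f : ℕ → ℕ) (hf : Monotone f) (hq : f q ≤ p) (t : S.Wbar p)
    (k : Fin q) :
    S.dv 0 (S.wT f hf hq t k.castSucc) = S.dh (k.val + 1) (S.wT f hf hq t k.succ) := by
  have hk : k.val ≤ q := le_of_lt k.isLt
  have hk1 : k.val + 1 ≤ q := k.isLt
  have hb0 : f k.val ≤ p := le_trans (hf hk) hq
  have hb1 : f (k.val + 1) ≤ p := le_trans (hf hk1) hq
  have hmono1 : Monotone (fun j => f (k.val + 1 + j) - f k.val) :=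
    wT_vmono f hf (k.val + 1) (f k.val)
  calc S.dv 0 (S.wT f hf hq t k.castSucc)
      = S.vAct (arr (q - (k.val + 1)) (q - k.val) (fc 0) (fc_mono 0))
          (S.hAct (arr k.val (f k.val) f hf)
            (S.vAct (arr (q - k.val) (p - f k.val) (fun j => f (k.val + j) - f k.val)
                (wT_vmono f hf k.val (f k.val)))
              (t.1 ⟨f k.val, by omega⟩))) := rfl
    _ = S.hAct (arr k.val (f k.val) f hf)
          (S.vAct (arr (q - (k.val + 1)) (q - k.val) (fc 0) (fc_mono 0))
            (S.vAct (arr (q - k.val) (p - f k.val) (fun j => f (k.val + j) - f k.val)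
                (wT_vmono f hf k.val (f k.val)))
              (t.1 ⟨f k.val, by omega⟩))) := (S.hAct_vAct _ _ _).symm
    _ = S.hAct (arr k.val (f k.val) f hf)
          (S.vAct (arr (q - (k.val + 1)) (q - k.val) (fc 0) (fc_mono 0) ≫
              arr (q - k.val) (p - f k.val) (fun j => f (k.val + j) - f k.val)
                (wT_vmono f hf k.val (f k.val)))
            (t.1 ⟨f k.val, by omega⟩)) := by rw [S.vAct_vAct]
    _ = S.hAct (arr k.val (f k.val) f hf)
          (S.vAct (arr (q - (k.val + 1)) (p - f k.val) (fun j => f (k.val + 1 + j) - f k.val)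
              hmono1)
            (t.1 ⟨f k.val, by omega⟩)) := by
        refine congrArg (fun a => S.hAct (arr k.val (f k.val) f hf)
          (S.vAct a (t.1 ⟨f k.val, by omega⟩))) ?_
        rw [arr_comp (fc_mono 0) (wT_vmono f hf k.val (f k.val))
          (fun x hx => by simp [fc]; omega)
          (fun x hx => by
            have h5 : f (k.val + (x + 1)) ≤ p := le_trans (hf (by omega)) hq
            simp [fc]; omega)]
        exact arr_ext _ _ (fun x hx => by
          simp only [fc]
          rw [if_neg (by omega), show k.val + (x + 1) = k.val + 1 + x by omega])
    _ = S.hAct (arr k.val (f (k.val + 1)) f hf)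
          (S.vAct (arr (q - (k.val + 1)) (p - f (k.val + 1))
              (fun j => f k.val + (f (k.val + 1 + j) - f k.val) - f (k.val + 1))
              (shift_mono hmono1 (f k.val) (f (k.val + 1))))
            (t.1 ⟨f (k.val + 1), by omega⟩)) := by
        apply S.act_shift t (f k.val) (f (k.val + 1)) hb0 hb1 (hf (by omega)) f _ hf hmono1
          (fun a ha => hf ha)
        intro j hj
        have h1 : f k.val ≤ f (k.val + 1 + j) := hf (by omega)
        have h2 : f (k.val + 1) ≤ f (k.val + 1 + j) := hf (by omega)
        have h3 : f (k.val + 1 + j) ≤ p := le_trans (hf (by omega)) hq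
        exact ⟨by omega, by omega⟩
    _ = S.hAct (arr k.val (f (k.val + 1)) f hf)
          (S.vAct (arr (q - (k.val + 1)) (p - f (k.val + 1))
              (fun j => f (k.val + 1 + j) - f (k.val + 1))
              (wT_vmono f hf (k.val + 1) (f (k.val + 1))))
            (t.1 ⟨f (k.val + 1), by omega⟩)) := by
        refine congrArg (fun a => S.hAct (arr k.val (f (k.val + 1)) f hf)
          (S.vAct a (t.1 ⟨f (k.val + 1), by omega⟩))) ?_
        apply arr_ext
        intro x hx
        have h1 : f k.val ≤ f (k.val + 1 + x) := hf (by omega)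
        have h2 : f (k.val + 1) ≤ f (k.val + 1 + x) := hf (by omega)
        omega
    _ = S.hAct (arr k.val (k.val + 1) (fc (k.val + 1)) (fc_mono _) ≫
            arr (k.val + 1) (f (k.val + 1)) f hf)
          (S.vAct (arr (q - (k.val + 1)) (p - f (k.val + 1))
              (fun j => f (k.val + 1 + j) - f (k.val + 1))
              (wT_vmono f hf (k.val + 1) (f (k.val + 1))))
            (t.1 ⟨f (k.val + 1), by omega⟩)) := by
        refine congrArg (fun a => S.hAct a (S.vAct (arr (q - (k.val + 1)) (p - f (k.val + 1))
              (fun j => f (k.val + 1 + j) - f (k.val + 1))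
              (wT_vmono f hf (k.val + 1) (f (k.val + 1))))
            (t.1 ⟨f (k.val + 1), by omega⟩))) ?_
        rw [arr_comp (fc_mono (k.val + 1)) hf
          (fun x hx => by simp only [fc]; split <;> omega)
          (fun x hx => by
            have e : fc (k.val + 1) x = x := by simp only [fc]; rw [if_pos (by omega)]
            rw [e]; exact hf (by omega))]
        exact (arr_ext _ _ (fun x hx => by
          have e : fc (k.val + 1) x = x := by simp only [fc]; rw [if_pos (by omega)]
          rw [e])).symm
    _ = S.dh (k.val + 1) (S.wT f hf hq t k.succ) := (S.hAct_hAct _ _ _).symm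

/-! ### `wMap`: the action of an abstract operator, and functoriality -/

def ofOH {q p : ℕ} (F : Fin (q + 1) →o Fin (p + 1)) : ℕ → ℕ :=
  fun a => (F ⟨min a q, by omega⟩).val

lemma ofOH_mono {q p : ℕ} (F : Fin (q + 1) →o Fin (p + 1)) : Monotone (ofOH F) :=
  fun a b h => F.monotone' (by simp only [Fin.mk_le_mk]; omega)

lemma ofOH_le {q p : ℕ} (F : Fin (q + 1) →o Fin (p + 1)) (a : ℕ) : ofOH F a ≤ p :=
  (F _).is_le

def wMap {q p : ℕ} (F : Fin (q + 1) →o Fin (p + 1)) (t : S.Wbar p) : S.Wbar q :=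
  ⟨fun k => S.wT (ofOH F) (ofOH_mono F) (ofOH_le F q) t k,
   fun k => S.wT_compat (ofOH F) (ofOH_mono F) (ofOH_le F q) t k⟩

lemma wMap_id {q : ℕ} (t : S.Wbar q) :
    S.wMap (OrderHom.id : Fin (q + 1) →o Fin (q + 1)) t = t := by
  apply Subtype.ext
  funext k
  have h1 : ∀ a, a ≤ q → ofOH (OrderHom.id : Fin (q + 1) →o Fin (q + 1)) a = a := by
    intro a ha
    simp only [ofOH, OrderHom.id_coe, id_eq]
    omega
  calc (S.wMap OrderHom.id t).1 k
      = S.wTm (ofOH OrderHom.id) (ofOH_mono _) t k (ofOH OrderHom.id k.val)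
          (ofOH_le _ _) := rfl
    _ = S.wTm (fun a => a) mono_id t k (ofOH OrderHom.id k.val) (ofOH_le _ _) :=
        S.wTm_congr _ _ t k _ _ h1
    _ = S.wTm (fun a => a) mono_id t k k.val (by omega) :=
        S.wTm_mcongr _ _ t k _ _ (h1 k.val k.is_le)
    _ = t.1 k := by
        unfold wTm
        rw [arr_id mono_id (fun x hx => rfl), S.hAct_id,
            arr_id (wT_vmono (fun a => a) mono_id k.val k.val) (fun x hx => by omega),
            S.vAct_id]

lemma wMap_comp {r p q : ℕ} (F : Fin (q + 1) →o Fin (p + 1)) (G : Fin (p + 1) →o Fin (r + 1))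
    (t : S.Wbar r) :
    S.wMap F (S.wMap G t) = S.wMap (G.comp F) t := by
  apply Subtype.ext
  funext k
  have hcomp : ∀ a, a ≤ q → ofOH (G.comp F) a = ofOH G (ofOH F a) := by
    intro a ha
    have e : (⟨min (F ⟨min a q, by omega⟩).val p, by omega⟩ : Fin (p + 1))
        = F ⟨min a q, by omega⟩ := Fin.ext (Nat.min_eq_left (Fin.is_le _))
    simp only [ofOH, OrderHom.comp_coe, Function.comp_apply]
    rw [e]
  have hgf_mono : Monotone (fun a => ofOH G (ofOH F a)) := (ofOH_mono G).comp (ofOH_mono F)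
  have hkq : k.val ≤ q := k.is_le
  have hfmono := ofOH_mono F
  have hgmono := ofOH_mono G
  calc (S.wMap F (S.wMap G t)).1 k
      = S.hAct (arr k.val (ofOH F k.val) (ofOH F) hfmono)
          (S.vAct (arr (q - k.val) (p - ofOH F k.val)
              (fun j => ofOH F (k.val + j) - ofOH F k.val) (wT_vmono _ hfmono k.val _))
            (S.hAct (arr (ofOH F k.val) (ofOH G (ofOH F k.val)) (ofOH G) hgmono)
              (S.vAct (arr (p - ofOH F k.val) (r - ofOH G (ofOH F k.val))
                  (fun j => ofOH G (ofOH F k.val + j) - ofOH G (ofOH F k.val))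
                  (wT_vmono _ hgmono (ofOH F k.val) _))
                (t.1 ⟨ofOH G (ofOH F k.val), by have := ofOH_le G (ofOH F k.val); omega⟩)))) := rfl
    _ = S.hAct (arr k.val (ofOH F k.val) (ofOH F) hfmono ≫
            arr (ofOH F k.val) (ofOH G (ofOH F k.val)) (ofOH G) hgmono)
          (S.vAct (arr (q - k.val) (p - ofOH F k.val)
              (fun j => ofOH F (k.val + j) - ofOH F k.val) (wT_vmono _ hfmono k.val _) ≫
              arr (p - ofOH F k.val) (r - ofOH G (ofOH F k.val))
                (fun j => ofOH G (ofOH F k.val + j) - ofOH G (ofOH F k.val))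
                (wT_vmono _ hgmono (ofOH F k.val) _))
            (t.1 ⟨ofOH G (ofOH F k.val), by have := ofOH_le G (ofOH F k.val); omega⟩)) := by
        rw [← S.hAct_vAct, S.hAct_hAct, S.vAct_vAct]
    _ = S.hAct (arr k.val (ofOH G (ofOH F k.val)) (fun a => ofOH G (ofOH F a)) hgf_mono)
          (S.vAct (arr (q - k.val) (r - ofOH G (ofOH F k.val))
              (fun j => ofOH G (ofOH F (k.val + j)) - ofOH G (ofOH F k.val))
              (wT_vmono _ hgf_mono k.val _))
            (t.1 ⟨ofOH G (ofOH F k.val), by have := ofOH_le G (ofOH F k.val); omega⟩)) := by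
        have eH : arr k.val (ofOH F k.val) (ofOH F) hfmono ≫
            arr (ofOH F k.val) (ofOH G (ofOH F k.val)) (ofOH G) hgmono
            = arr k.val (ofOH G (ofOH F k.val)) (fun a => ofOH G (ofOH F a)) hgf_mono := by
          rw [arr_comp hfmono hgmono (fun x hx => hfmono hx) (fun x hx => hgmono (hfmono hx))]
        have eV : arr (q - k.val) (p - ofOH F k.val)
              (fun j => ofOH F (k.val + j) - ofOH F k.val) (wT_vmono _ hfmono k.val _) ≫
              arr (p - ofOH F k.val) (r - ofOH G (ofOH F k.val))
                (fun j => ofOH G (ofOH F k.val + j) - ofOH G (ofOH F k.val))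
                (wT_vmono _ hgmono (ofOH F k.val) _)
            = arr (q - k.val) (r - ofOH G (ofOH F k.val))
              (fun j => ofOH G (ofOH F (k.val + j)) - ofOH G (ofOH F k.val))
              (wT_vmono _ hgf_mono k.val _) := by
          rw [arr_comp (wT_vmono _ hfmono k.val _) (wT_vmono _ hgmono (ofOH F k.val) _)
            (fun x hx => by have := ofOH_le F (k.val + x); omega)
            (fun x hx => by
              have := ofOH_le G (ofOH F k.val + (ofOH F (k.val + x) - ofOH F k.val))
              omega)]
          apply arr_ext
          intro x hx
          show min (ofOH G (ofOH F k.val + (ofOH F (k.val + x) - ofOH F k.val)) -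
              ofOH G (ofOH F k.val)) (r - ofOH G (ofOH F k.val)) = _
          have h1 : ofOH F k.val ≤ ofOH F (k.val + x) := hfmono (by omega)
          rw [Nat.add_sub_cancel' h1]
        rw [eH, eV]
    _ = (S.wMap (G.comp F) t).1 k := by
        have e3 : (S.wMap (G.comp F) t).1 k
            = S.wTm (fun a => ofOH G (ofOH F a)) hgf_mono t k (ofOH G (ofOH F k.val))
                (by have := ofOH_le G (ofOH F k.val); omega) := by
          calc (S.wMap (G.comp F) t).1 k
              = S.wTm (ofOH (G.comp F)) (ofOH_mono _) t k (ofOH (G.comp F) k.val)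
                  (ofOH_le _ _) := rfl
            _ = S.wTm (fun a => ofOH G (ofOH F a)) hgf_mono t k (ofOH (G.comp F) k.val)
                  (ofOH_le _ _) := S.wTm_congr _ _ t k _ _ hcomp
            _ = _ := S.wTm_mcongr _ _ t k _ _ (hcomp k.val hkq)
        rw [e3]
        unfold wTm
        exact congrArg (fun a => S.hAct
          (arr k.val (ofOH G (ofOH F k.val)) (fun a => ofOH G (ofOH F a)) hgf_mono)
          (S.vAct a (t.1 ⟨ofOH G (ofOH F k.val),
            by have := ofOH_le G (ofOH F k.val); omega⟩)))
          (arr_ext _ _ (fun x hx => rfl))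

/-! ### faces and degeneracies of `W̄S` -/

lemma ofOH_delta {p : ℕ} (i : Fin (p + 2)) (a : ℕ) (ha : a ≤ p) :
    ofOH (SimplexCategory.δ i).toOrderHom a = fc i.val a := by
  show (i.succAbove ⟨min a p, by omega⟩).val = fc i.val a
  simp only [Fin.succAbove, Fin.lt_def, Fin.coe_castSucc, fc, apply_ite Fin.val,
    Fin.val_succ]
  split_ifs <;> omega

lemma ofOH_sigma {p : ℕ} (i : Fin (p + 1)) (a : ℕ) (ha : a ≤ p + 1) :
    ofOH (SimplexCategory.σ i).toOrderHom a = dgm i.val a := by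
  have hmin : min a (p + 1) = a := Nat.min_eq_left ha
  show (i.predAbove ⟨min a (p + 1), by omega⟩).val = dgm i.val a
  unfold Fin.predAbove
  by_cases hc : i.val < a
  · rw [dif_pos (by simp only [Fin.lt_def, Fin.coe_castSucc]; omega)]
    simp only [Fin.coe_pred, dgm]
    rw [if_neg (by omega)]
    omega
  · rw [dif_neg (by simp only [Fin.lt_def, Fin.coe_castSucc]; omega)]
    simp only [Fin.coe_castPred, dgm]
    rw [if_pos (by omega)]
    omega

lemma wMap_delta {p : ℕ} (i : Fin (p + 2)) (x : S.Wbar (p + 1)) :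
    (S.wMap (q := p) (p := p + 1) (SimplexCategory.δ i).toOrderHom x).1
      = S.wFaceTuple i.val x := by
  funext m
  have hkey : ∀ a, a ≤ p → ofOH (SimplexCategory.δ i).toOrderHom a = fc i.val a :=
    fun a ha => ofOH_delta i a ha
  have hmp : m.val ≤ p := m.is_le
  by_cases h : m.val < i.val
  · have e : fc i.val m.val = m.val := by simp only [fc]; rw [if_pos h]
    calc (S.wMap (q := p) (p := p + 1) (SimplexCategory.δ i).toOrderHom x).1 m
        = S.wTm (ofOH (SimplexCategory.δ i).toOrderHom) (ofOH_mono _) x m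
            (ofOH (SimplexCategory.δ i).toOrderHom m.val) (ofOH_le _ _) := rfl
      _ = S.wTm (fc i.val) (fc_mono _) x m (ofOH (SimplexCategory.δ i).toOrderHom m.val)
            (ofOH_le _ _) := S.wTm_congr _ _ x m _ _ hkey
      _ = S.wTm (fc i.val) (fc_mono _) x m m.val (by omega) :=
            S.wTm_mcongr _ _ x m _ _ (by rw [hkey m.val hmp, e])
      _ = S.wFaceTuple i.val x m := by
          unfold wTm wFaceTuple
          rw [dif_pos h]
          rw [arr_id (fc_mono i.val) (fun a' ha' => by simp only [fc]; rw [if_pos (by omega)]),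
            S.hAct_id]
          exact congrArg (fun a => S.vAct a (x.1 ⟨m.val, by omega⟩))
            (arr_ext (wT_vmono (fc i.val) (fc_mono i.val) m.val m.val)
              (fc_mono (i.val - m.val))
              (fun j hj => by simp only [fc]; split_ifs <;> omega))
  · have e : fc i.val m.val = m.val + 1 := by simp only [fc]; rw [if_neg h]
    calc (S.wMap (q := p) (p := p + 1) (SimplexCategory.δ i).toOrderHom x).1 m
        = S.wTm (ofOH (SimplexCategory.δ i).toOrderHom) (ofOH_mono _) x m
            (ofOH (SimplexCategory.δ i).toOrderHom m.val) (ofOH_le _ _) := rfl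
      _ = S.wTm (fc i.val) (fc_mono _) x m (ofOH (SimplexCategory.δ i).toOrderHom m.val)
            (ofOH_le _ _) := S.wTm_congr _ _ x m _ _ hkey
      _ = S.wTm (fc i.val) (fc_mono _) x m (m.val + 1) (by omega) :=
            S.wTm_mcongr _ _ x m _ _ (by rw [hkey m.val hmp, e])
      _ = S.wFaceTuple i.val x m := by
          unfold wTm wFaceTuple
          rw [dif_neg h]
          have ec := S.vAct_arr_cast (show p + 1 - (m.val + 1) = p - m.val by omega)
            (wT_vmono (fc i.val) (fc_mono i.val) m.val (m.val + 1))
            (fun j hj => by simp only [fc]; rw [if_neg (by omega)]; omega)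
            (x.1 ⟨m.val + 1, by omega⟩)
          rw [ec, S.hAct_ocast]
          rfl

lemma wMap_sigma {p : ℕ} (i : Fin (p + 1)) (x : S.Wbar p) :
    (S.wMap (q := p + 1) (p := p) (SimplexCategory.σ i).toOrderHom x).1
      = S.wDegTuple i.val i.is_le x := by
  funext m
  have hkey : ∀ a, a ≤ p + 1 → ofOH (SimplexCategory.σ i).toOrderHom a = dgm i.val a :=
    fun a ha => ofOH_sigma i a ha
  have hmp : m.val ≤ p + 1 := m.is_le
  have hip : i.val ≤ p := i.is_le
  by_cases h : m.val ≤ i.val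
  · have e : dgm i.val m.val = m.val := by simp only [dgm]; rw [if_pos h]
    calc (S.wMap (q := p + 1) (p := p) (SimplexCategory.σ i).toOrderHom x).1 m
        = S.wTm (ofOH (SimplexCategory.σ i).toOrderHom) (ofOH_mono _) x m
            (ofOH (SimplexCategory.σ i).toOrderHom m.val) (ofOH_le _ _) := rfl
      _ = S.wTm (dgm i.val) (dgm_mono _) x m (ofOH (SimplexCategory.σ i).toOrderHom m.val)
            (ofOH_le _ _) := S.wTm_congr _ _ x m _ _ hkey
      _ = S.wTm (dgm i.val) (dgm_mono _) x m m.val (by omega) :=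
            S.wTm_mcongr _ _ x m _ _ (by rw [hkey m.val hmp, e])
      _ = S.wDegTuple i.val i.is_le x m := by
          unfold wTm wDegTuple
          rw [dif_pos h]
          rw [arr_id (dgm_mono i.val) (fun a' ha' => by simp only [dgm]; rw [if_pos (by omega)]),
            S.hAct_id]
          exact congrArg (fun a => S.vAct a (x.1 ⟨m.val, by omega⟩))
            (arr_ext (wT_vmono (dgm i.val) (dgm_mono i.val) m.val m.val)
              (dgm_mono (i.val - m.val))
              (fun j hj => by simp only [dgm]; split_ifs <;> omega))
  · have e : dgm i.val m.val = m.val - 1 := by simp only [dgm]; rw [if_neg h]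
    calc (S.wMap (q := p + 1) (p := p) (SimplexCategory.σ i).toOrderHom x).1 m
        = S.wTm (ofOH (SimplexCategory.σ i).toOrderHom) (ofOH_mono _) x m
            (ofOH (SimplexCategory.σ i).toOrderHom m.val) (ofOH_le _ _) := rfl
      _ = S.wTm (dgm i.val) (dgm_mono _) x m (ofOH (SimplexCategory.σ i).toOrderHom m.val)
            (ofOH_le _ _) := S.wTm_congr _ _ x m _ _ hkey
      _ = S.wTm (dgm i.val) (dgm_mono _) x m (m.val - 1) (by omega) :=
            S.wTm_mcongr _ _ x m _ _ (by rw [hkey m.val hmp, e])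
      _ = S.wDegTuple i.val i.is_le x m := by
          unfold wTm wDegTuple
          rw [dif_neg h]
          have ec := S.vAct_arr_cast (show p - (m.val - 1) = p + 1 - m.val by omega)
            (wT_vmono (dgm i.val) (dgm_mono i.val) m.val (m.val - 1))
            (fun j hj => by simp only [dgm]; rw [if_neg (by omega)]; omega)
            (x.1 ⟨m.val - 1, by omega⟩)
          rw [ec, S.hAct_ocast]
          rfl

/-! ### the map `Φ` -/

lemma phi_compat {p : ℕ} (t : S.obj2 p p) (k : Fin p) :
    S.dv 0 (S.phiTuple t k.castSucc) = S.dh (k.val + 1) (S.phiTuple t k.succ) := by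
  have hk : k.val < p := k.isLt
  calc S.dv 0 (S.phiTuple t k.castSucc)
      = S.vAct (arr (p - (k.val + 1)) (p - k.val) (fc 0) (fc_mono 0))
          (S.hAct (arr k.val p (fcIter (k.val + 1) (p - k.val)) (fcIter_mono _ _))
            (S.vAct (arr (p - k.val) p (fcIter 0 k.val) (fcIter_mono _ _)) t)) := rfl
    _ = S.hAct (arr k.val p (fcIter (k.val + 1) (p - k.val)) (fcIter_mono _ _))
          (S.vAct (arr (p - (k.val + 1)) (p - k.val) (fc 0) (fc_mono 0))
            (S.vAct (arr (p - k.val) p (fcIter 0 k.val) (fcIter_mono _ _)) t)) :=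
        (S.hAct_vAct _ _ _).symm
    _ = S.hAct (arr k.val p (fcIter (k.val + 1) (p - k.val)) (fcIter_mono _ _))
          (S.vAct (arr (p - (k.val + 1)) (p - k.val) (fc 0) (fc_mono 0) ≫
              arr (p - k.val) p (fcIter 0 k.val) (fcIter_mono _ _)) t) := by
        rw [S.vAct_vAct]
    _ = S.hAct (arr k.val p (fcIter (k.val + 1) (p - k.val)) (fcIter_mono _ _))
          (S.vAct (arr (p - (k.val + 1)) p (fun j => j + (k.val + 1)) (mono_shift _)) t) := by
        refine congrArg (fun a => S.hAct (arr k.val p (fcIter (k.val + 1) (p - k.val))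
          (fcIter_mono _ _)) (S.vAct a t)) ?_
        rw [arr_comp (fc_mono 0) (fcIter_mono 0 k.val)
          (fun x hx => by simp only [fc]; split_ifs <;> omega)
          (fun x hx => by simp only [fc, fcIter]; split_ifs <;> omega)]
        exact arr_ext _ _ (fun x hx => by simp only [fc, fcIter]; split_ifs <;> omega)
    _ = S.hAct (arr k.val p (fun a => a) mono_id)
          (S.vAct (arr (p - (k.val + 1)) p (fun j => j + (k.val + 1)) (mono_shift _)) t) := by
        refine congrArg (fun a => S.hAct a
          (S.vAct (arr (p - (k.val + 1)) p (fun j => j + (k.val + 1)) (mono_shift _)) t)) ?_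
        exact arr_ext _ _ (fun x hx => by simp only [fcIter]; split_ifs <;> omega)
    _ = S.hAct (arr k.val (k.val + 1) (fc (k.val + 1)) (fc_mono _) ≫
            arr (k.val + 1) p (fcIter (k.val + 1 + 1) (p - (k.val + 1))) (fcIter_mono _ _))
          (S.vAct (arr (p - (k.val + 1)) p (fun j => j + (k.val + 1)) (mono_shift _)) t) := by
        refine congrArg (fun a => S.hAct a
          (S.vAct (arr (p - (k.val + 1)) p (fun j => j + (k.val + 1)) (mono_shift _)) t)) ?_
        rw [arr_comp (fc_mono (k.val + 1)) (fcIter_mono _ _)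
          (fun x hx => by simp only [fc]; split_ifs <;> omega)
          (fun x hx => by simp only [fc, fcIter]; split_ifs <;> omega)]
        exact (arr_ext _ _ (fun x hx => by simp only [fc, fcIter]; split_ifs <;> omega)).symm
    _ = S.hAct (arr k.val (k.val + 1) (fc (k.val + 1)) (fc_mono _) ≫
            arr (k.val + 1) p (fcIter (k.val + 1 + 1) (p - (k.val + 1))) (fcIter_mono _ _))
          (S.vAct (arr (p - (k.val + 1)) p (fcIter 0 (k.val + 1)) (fcIter_mono _ _)) t) := by
        refine congrArg (fun a => S.hAct (arr k.val (k.val + 1) (fc (k.val + 1)) (fc_mono _) ≫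
            arr (k.val + 1) p (fcIter (k.val + 1 + 1) (p - (k.val + 1))) (fcIter_mono _ _))
          (S.vAct a t)) ?_
        exact arr_ext _ _ (fun x hx => by simp only [fcIter]; split_ifs <;> omega)
    _ = S.dh (k.val + 1) (S.phiTuple t k.succ) := (S.hAct_hAct _ _ _).symm

lemma toArr {q p : ℕ} (g : SimplexCategory.mk q ⟶ SimplexCategory.mk p) :
    g = arr q p (ofOH g.toOrderHom) (ofOH_mono _) := by
  apply SimplexCategory.Hom.ext
  apply OrderHom.ext
  funext x
  apply Fin.ext
  show (g.toOrderHom x).val = _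
  simp only [arr, SimplexCategory.mkHom, SimplexCategory.Hom.toOrderHom_mk, OrderHom.coe_mk,
    SimplexCategory.len_mk, ofOH]
  rw [show (⟨min x.val q, by omega⟩ : Fin (q + 1)) = x from Fin.ext (Nat.min_eq_left x.is_le)]
  rw [Nat.min_eq_left (Fin.is_le _)]

lemma phi_natural {q p : ℕ} (g : SimplexCategory.mk q ⟶ SimplexCategory.mk p)
    (t : S.obj2 p p) (u : S.Wbar p) (hu : ∀ m, u.1 m = S.phiTuple t m) (k : Fin (q + 1)) :
    S.wT (ofOH g.toOrderHom) (ofOH_mono _) (ofOH_le _ q) u k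
      = S.phiTuple (S.vAct g (S.hAct g t)) k := by
  have hf : Monotone (ofOH g.toOrderHom) := ofOH_mono _
  have hfp : ∀ a, ofOH g.toOrderHom a ≤ p := ofOH_le _
  have hk : k.val ≤ q := k.is_le
  have hcm : Monotone (fun j => ofOH g.toOrderHom (k.val + j)) :=
    fun _ _ h => hf (Nat.add_le_add_left h _)
  rw [show S.phiTuple (S.vAct g (S.hAct g t)) k
      = S.phiTuple (S.vAct (arr q p (ofOH g.toOrderHom) (ofOH_mono _))
          (S.hAct (arr q p (ofOH g.toOrderHom) (ofOH_mono _)) t)) k from by rw [← toArr g]]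
  calc S.wT (ofOH g.toOrderHom) (ofOH_mono _) (ofOH_le _ q) u k
      = S.hAct (arr k.val (ofOH g.toOrderHom k.val) (ofOH g.toOrderHom) (ofOH_mono _))
          (S.vAct (arr (q - k.val) (p - ofOH g.toOrderHom k.val)
              (fun j => ofOH g.toOrderHom (k.val + j) - ofOH g.toOrderHom k.val)
              (wT_vmono _ (ofOH_mono _) k.val _))
            (u.1 ⟨ofOH g.toOrderHom k.val, by have := hfp k.val; omega⟩)) := rfl
    _ = S.hAct (arr k.val (ofOH g.toOrderHom k.val) (ofOH g.toOrderHom) (ofOH_mono _))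
          (S.vAct (arr (q - k.val) (p - ofOH g.toOrderHom k.val)
              (fun j => ofOH g.toOrderHom (k.val + j) - ofOH g.toOrderHom k.val)
              (wT_vmono _ (ofOH_mono _) k.val _))
            (S.hAct (arr (ofOH g.toOrderHom k.val) p
                (fcIter (ofOH g.toOrderHom k.val + 1) (p - ofOH g.toOrderHom k.val))
                (fcIter_mono _ _))
              (S.vAct (arr (p - ofOH g.toOrderHom k.val) p (fcIter 0 (ofOH g.toOrderHom k.val))
                  (fcIter_mono _ _)) t))) := by rw [hu]; rfl
    _ = S.hAct (arr k.val (ofOH g.toOrderHom k.val) (ofOH g.toOrderHom) (ofOH_mono _) ≫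
            arr (ofOH g.toOrderHom k.val) p
              (fcIter (ofOH g.toOrderHom k.val + 1) (p - ofOH g.toOrderHom k.val))
              (fcIter_mono _ _))
          (S.vAct (arr (q - k.val) (p - ofOH g.toOrderHom k.val)
              (fun j => ofOH g.toOrderHom (k.val + j) - ofOH g.toOrderHom k.val)
              (wT_vmono _ (ofOH_mono _) k.val _) ≫
              arr (p - ofOH g.toOrderHom k.val) p (fcIter 0 (ofOH g.toOrderHom k.val))
                (fcIter_mono _ _)) t) := by
        rw [← S.hAct_vAct, S.hAct_hAct, S.vAct_vAct]
    _ = S.hAct (arr k.val p (ofOH g.toOrderHom) (ofOH_mono _))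
          (S.vAct (arr (q - k.val) p (fun j => ofOH g.toOrderHom (k.val + j)) hcm) t) := by
        have eH : arr k.val (ofOH g.toOrderHom k.val) (ofOH g.toOrderHom) (ofOH_mono _) ≫
            arr (ofOH g.toOrderHom k.val) p
              (fcIter (ofOH g.toOrderHom k.val + 1) (p - ofOH g.toOrderHom k.val))
              (fcIter_mono _ _)
            = arr k.val p (ofOH g.toOrderHom) (ofOH_mono _) := by
          rw [arr_comp (ofOH_mono _) (fcIter_mono _ _) (fun x hx => hf hx)
            (fun x hx => by
              have e1 : ofOH g.toOrderHom x ≤ ofOH g.toOrderHom k.val := hf hx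
              have e2 := hfp x
              simp only [fcIter]; split_ifs <;> omega)]
          exact arr_ext _ _ (fun x hx => by
            have e1 : ofOH g.toOrderHom x ≤ ofOH g.toOrderHom k.val := hf hx
            simp only [fcIter]; split_ifs <;> omega)
        have eV : arr (q - k.val) (p - ofOH g.toOrderHom k.val)
              (fun j => ofOH g.toOrderHom (k.val + j) - ofOH g.toOrderHom k.val)
              (wT_vmono _ (ofOH_mono _) k.val _) ≫
              arr (p - ofOH g.toOrderHom k.val) p (fcIter 0 (ofOH g.toOrderHom k.val))
                (fcIter_mono _ _)
            = arr (q - k.val) p (fun j => ofOH g.toOrderHom (k.val + j)) hcm := by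
          rw [arr_comp (wT_vmono _ (ofOH_mono _) k.val _) (fcIter_mono _ _)
            (fun x hx => by have := hfp (k.val + x); omega)
            (fun x hx => by
              have e1 : ofOH g.toOrderHom k.val ≤ ofOH g.toOrderHom (k.val + x) :=
                hf (by omega)
              have e2 := hfp (k.val + x)
              simp only [fcIter]; split_ifs <;> omega)]
          exact arr_ext _ _ (fun x hx => by
            have e1 : ofOH g.toOrderHom k.val ≤ ofOH g.toOrderHom (k.val + x) := hf (by omega)
            simp only [fcIter]; split_ifs <;> omega)
        rw [eH, eV]
    _ = S.hAct (arr k.val q (fcIter (k.val + 1) (q - k.val)) (fcIter_mono _ _) ≫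
            arr q p (ofOH g.toOrderHom) (ofOH_mono _))
          (S.vAct (arr (q - k.val) q (fcIter 0 k.val) (fcIter_mono _ _) ≫
              arr q p (ofOH g.toOrderHom) (ofOH_mono _)) t) := by
        have eH : arr k.val q (fcIter (k.val + 1) (q - k.val)) (fcIter_mono _ _) ≫
            arr q p (ofOH g.toOrderHom) (ofOH_mono _)
            = arr k.val p (ofOH g.toOrderHom) (ofOH_mono _) := by
          rw [arr_comp (fcIter_mono _ _) (ofOH_mono _)
            (fun x hx => by simp only [fcIter]; split_ifs <;> omega)
            (fun x hx => by
              have e : fcIter (k.val + 1) (q - k.val) x = x := by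
                simp only [fcIter]; rw [if_pos (by omega)]
              rw [e]; exact hfp x)]
          exact arr_ext _ _ (fun x hx => by
            have e : fcIter (k.val + 1) (q - k.val) x = x := by
              simp only [fcIter]; rw [if_pos (by omega)]
            rw [e])
        have eV : arr (q - k.val) q (fcIter 0 k.val) (fcIter_mono _ _) ≫
              arr q p (ofOH g.toOrderHom) (ofOH_mono _)
            = arr (q - k.val) p (fun j => ofOH g.toOrderHom (k.val + j)) hcm := by
          rw [arr_comp (fcIter_mono _ _) (ofOH_mono _)
            (fun x hx => by simp only [fcIter]; split_ifs <;> omega)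
            (fun x hx => by
              have e : fcIter 0 k.val x = x + k.val := by
                simp only [fcIter]; rw [if_neg (by omega)]
              rw [e]; exact hfp _)]
          exact arr_ext _ _ (fun x hx => by
            have e : fcIter 0 k.val x = x + k.val := by
              simp only [fcIter]; rw [if_neg (by omega)]
            rw [e, Nat.add_comm x k.val])
        rw [eH, eV]
    _ = S.hAct (arr k.val q (fcIter (k.val + 1) (q - k.val)) (fcIter_mono _ _))
          (S.hAct (arr q p (ofOH g.toOrderHom) (ofOH_mono _))
            (S.vAct (arr (q - k.val) q (fcIter 0 k.val) (fcIter_mono _ _) ≫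
                arr q p (ofOH g.toOrderHom) (ofOH_mono _)) t)) := (S.hAct_hAct _ _ _).symm
    _ = S.hAct (arr k.val q (fcIter (k.val + 1) (q - k.val)) (fcIter_mono _ _))
          (S.hAct (arr q p (ofOH g.toOrderHom) (ofOH_mono _))
            (S.vAct (arr (q - k.val) q (fcIter 0 k.val) (fcIter_mono _ _))
              (S.vAct (arr q p (ofOH g.toOrderHom) (ofOH_mono _)) t))) := by
        rw [S.vAct_vAct]
    _ = S.phiTuple (S.vAct (arr q p (ofOH g.toOrderHom) (ofOH_mono _))
          (S.hAct (arr q p (ofOH g.toOrderHom) (ofOH_mono _)) t)) k := by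
        rw [S.hAct_vAct (arr q p (ofOH g.toOrderHom) (ofOH_mono _))
          (arr (q - k.val) q (fcIter 0 k.val) (fcIter_mono _ _))]
        rw [S.hAct_vAct (arr q p (ofOH g.toOrderHom) (ofOH_mono _))
          (arr q p (ofOH g.toOrderHom) (ofOH_mono _)) t]
        rfl

/-! ### functoriality in `S` and assembly -/

def aApp {S T : BiSSet} (alpha : S ⟶ T) {p q : ℕ} (t : S.obj2 p q) : T.obj2 p q :=
  (alpha.app (op (SimplexCategory.mk p))).app (op (SimplexCategory.mk q)) t

lemma aApp_h {S T : BiSSet} (alpha : S ⟶ T) {p p' q : ℕ}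
    (f : SimplexCategory.mk p' ⟶ SimplexCategory.mk p) (t : S.obj2 p q) :
    aApp alpha (S.hAct f t) = T.hAct f (aApp alpha t) :=
  types_congr_hom (NatTrans.congr_app (alpha.naturality f.op) (op (SimplexCategory.mk q))) t

lemma aApp_v {S T : BiSSet} (alpha : S ⟶ T) {p q q' : ℕ}
    (f : SimplexCategory.mk q' ⟶ SimplexCategory.mk q) (t : S.obj2 p q) :
    aApp alpha (S.vAct f t) = T.vAct f (aApp alpha t) :=
  NatTrans.naturality_apply (alpha.app (op (SimplexCategory.mk p))) f.op t

lemma phi_aApp {S T : BiSSet} (alpha : S ⟶ T) {p : ℕ} (t : S.obj2 p p) (m : Fin (p + 1)) :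
    aApp alpha (S.phiTuple t m) = T.phiTuple (aApp alpha t) m := by
  unfold phiTuple
  rw [aApp_h, aApp_v]

def WnatApp {S T : BiSSet} (alpha : S ⟶ T) (n : ℕ) (u : S.Wbar n) : T.Wbar n :=
  ⟨fun m => aApp alpha (u.1 m), by
    intro k
    calc T.dv 0 (aApp alpha (u.1 k.castSucc))
        = aApp alpha (S.dv 0 (u.1 k.castSucc)) := (aApp_v alpha _ _).symm
      _ = aApp alpha (S.dh (k.val + 1) (u.1 k.succ)) := congrArg (aApp alpha) (u.2 k)
      _ = T.dh (k.val + 1) (aApp alpha (u.1 k.succ)) := aApp_h alpha _ _⟩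

lemma WnatApp_wMap {S T : BiSSet} (alpha : S ⟶ T) {q p : ℕ} (F : Fin (q + 1) →o Fin (p + 1))
    (u : S.Wbar p) :
    WnatApp alpha q (S.wMap F u) = T.wMap F (WnatApp alpha p u) := by
  apply Subtype.ext
  funext k
  calc aApp alpha ((S.wMap F u).1 k)
      = aApp alpha (S.hAct (arr k.val (ofOH F k.val) (ofOH F) (ofOH_mono _))
          (S.vAct (arr (q - k.val) (p - ofOH F k.val)
              (fun j => ofOH F (k.val + j) - ofOH F k.val) (wT_vmono _ (ofOH_mono _) k.val _))
            (u.1 ⟨ofOH F k.val, by have := ofOH_le F k.val; omega⟩))) := rfl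
    _ = T.hAct (arr k.val (ofOH F k.val) (ofOH F) (ofOH_mono _))
          (T.vAct (arr (q - k.val) (p - ofOH F k.val)
              (fun j => ofOH F (k.val + j) - ofOH F k.val) (wT_vmono _ (ofOH_mono _) k.val _))
            (aApp alpha (u.1 ⟨ofOH F k.val, by have := ofOH_le F k.val; omega⟩))) := by
        rw [aApp_h, aApp_v]
    _ = (T.wMap F (WnatApp alpha p u)).1 k := rfl

def Wob (S : BiSSet) : SSet.{0} where
  obj X := S.Wbar X.unop.len
  map f := TypeCat.ofHom (fun u => S.wMap f.unop.toOrderHom u)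
  map_id X := by
    ext u
    exact S.wMap_id u
  map_comp f g := by
    ext u
    exact (S.wMap_comp g.unop.toOrderHom f.unop.toOrderHom u).symm

def Wnat {S T : BiSSet} (alpha : S ⟶ T) : Wob S ⟶ Wob T where
  app X := TypeCat.ofHom (fun u => WnatApp alpha X.unop.len u)
  naturality X Y h := by
    ext u
    exact WnatApp_wMap alpha h.unop.toOrderHom u

def PhiApp (S : BiSSet) (n : ℕ) (t : S.obj2 n n) : S.Wbar n :=
  ⟨fun m => S.phiTuple t m, fun k => S.phi_compat t k⟩

end Aux

end BiSSet

/-- The diagonal simplicial set of a bisimplicial set. -/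
def diagSSet (S : BiSSet) : SSet.{0} := Functor.diag _ ⋙ Functor.uncurry.obj S

/-- The map induced on diagonals by a morphism of bisimplicial sets. -/
def diagMap {S T : BiSSet} (α : S ⟶ T) : diagSSet S ⟶ diagSSet T :=
  CategoryTheory.Functor.whiskerLeft (Functor.diag _) (Functor.uncurry.map α)

open BiSSet in
/-- `Φ` as a morphism of simplicial sets. -/
def PhiNat (S : BiSSet) : diagSSet S ⟶ Wob S where
  app X := TypeCat.ofHom (fun t => PhiApp S X.unop.len t)
  naturality X Y h := by
    ext t
    apply Subtype.ext
    funext k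
    exact (S.phi_natural (q := Y.unop.len) (p := X.unop.len) h.unop t (PhiApp S X.unop.len t) (fun m => rfl) k).symm


/-- For any bisimplicial set `S` there is a codiagonal simplicial set
`W S` (with the structure described in the previous statement), functorial in `S`, and a
simplicial map `Φ S : diag S ⟶ W̄ S`, given on a `p`-simplex `t ∈ S_{p,p}` by
`Φ t = ((d_1^h)^p t, …, (d_{m+1}^h)^{p-m}(d_0^v)^m t, …, (d_0^v)^p t)`,
which is natural in `S`. -/
theorem phi_is_simplicial_and_natural :
    ∃ (W : BiSSet → SSet.{0})
      (e : ∀ (S : BiSSet) (p : ℕ), (W S).obj (op (SimplexCategory.mk p)) ≃ S.Wbar p)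
      (Wmap : ∀ {S T : BiSSet}, (S ⟶ T) → ((W S) ⟶ (W T)))
      (Φ : ∀ S : BiSSet, diagSSet S ⟶ W S),
      -- `W S` carries the codiagonal simplicial structure
      (∀ (S : BiSSet) (p : ℕ) (i : Fin (p + 2))
          (x : (W S).obj (op (SimplexCategory.mk (p + 1)))),
        ((e S p) ((W S).map (SimplexCategory.δ i).op x)).1 =
          S.wFaceTuple i.val (e S (p + 1) x)) ∧
      (∀ (S : BiSSet) (p : ℕ) (i : Fin (p + 1))
          (x : (W S).obj (op (SimplexCategory.mk p))),
        ((e S (p + 1)) ((W S).map (SimplexCategory.σ i).op x)).1 =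
          S.wDegTuple i.val i.is_le (e S p x)) ∧
      -- `Wmap` is induced componentwise, so that `W` is functorial in `S`
      (∀ (S T : BiSSet) (α : S ⟶ T) (p : ℕ)
          (x : (W S).obj (op (SimplexCategory.mk p))) (m : Fin (p + 1)),
        ((e T p) ((Wmap α).app (op (SimplexCategory.mk p)) x)).1 m =
          (α.app (op (SimplexCategory.mk m.val))).app
            (op (SimplexCategory.mk (p - m.val))) (((e S p) x).1 m)) ∧
      -- `Φ` is given by the stated formula (in particular it is well defined:
      -- the tuple `phiTuple` satisfies the compatibility equations of `W̄S`)
      (∀ (S : BiSSet) (p : ℕ) (t : (diagSSet S).obj (op (SimplexCategory.mk p))),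
        ((e S p) ((Φ S).app (op (SimplexCategory.mk p)) t)).1 = S.phiTuple t) ∧
      -- naturality of `Φ` in `S`
      (∀ (S T : BiSSet) (α : S ⟶ T), Φ S ≫ Wmap α = diagMap α ≫ Φ T) := by
  classical
  refine ⟨BiSSet.Wob, fun S p => Equiv.refl _, fun {S T} alpha => BiSSet.Wnat alpha, PhiNat,
    ?_, ?_, ?_, ?_, ?_⟩
  · intro S p i x
    exact S.wMap_delta i x
  · intro S p i x
    exact S.wMap_sigma i x
  · intro S T alpha p x m
    rfl
  · intro S p t
    rfl
  · intro S T alpha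
    apply NatTrans.ext
    funext X
    ext t
    apply Subtype.ext
    funext m
    exact BiSSet.phi_aApp alpha t m
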